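/- Let f ∈ C[x1,...,x6] be homogeneous of degree p, with no monomial divisible by x4x5, written as f = g(x1,x2,x3,x5,x6) + x4·h(x1,x2,x3,x4,x6). If the polynomial f(y1, y2, y3, y3y4, 1, y4) ∈ C[y1,y2,y3,y4] is divisible by y4^{p-1}, then every monomial of f has total degree in the variables x4 and x6 at least p-1. -/

import Mathlib

open MvPolynomial

private noncomputable def phi (m : Fin 6 →₀ ℕ) : Fin 4 →₀ ℕ :=
  Finsupp.single 0 (m 0) + Finsupp.single 1 (m 1) + Finsupp.single 2 (m 2 + m 3)
    + Finsupp.single 3 (m 3 + m 5)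

private lemma phi_apply (m : Fin 6 →₀ ℕ) :
    phi m 0 = m 0 ∧ phi m 1 = m 1 ∧ phi m 2 = m 2 + m 3 ∧ phi m 3 = m 3 + m 5 := by
  refine ⟨?_, ?_, ?_, ?_⟩ <;> simp [phi, Finsupp.single_apply]

private lemma aeval_mono (m : Fin 6 →₀ ℕ) :
    (∏ i : Fin 6, (![X 0, X 1, X 2, X 2 * X 3, 1, X 3] : Fin 6 → MvPolynomial (Fin 4) ℂ) i ^ m i)
      = monomial (phi m) 1 := by
  rw [Fin.prod_univ_six]
  show (X 0 : MvPolynomial (Fin 4) ℂ) ^ m 0 * X 1 ^ m 1 * X 2 ^ m 2 * (X 2 * X 3) ^ m 3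
      * 1 ^ m 4 * X 3 ^ m 5 = _
  rw [mul_pow, one_pow, mul_one]
  simp only [X_pow_eq_monomial, monomial_mul, mul_one]
  refine congrArg (fun s => monomial s (1:ℂ)) ?_
  ext i
  fin_cases i <;> simp [phi, Finsupp.single_apply]

private lemma deg_sum (p : ℕ) {f : MvPolynomial (Fin 6) ℂ} (hf : f.IsHomogeneous p)
    {m : Fin 6 →₀ ℕ} (hm : m ∈ f.support) :
    m 0 + m 1 + m 2 + m 3 + m 4 + m 5 = p := by
  have h := hf (mem_support_iff.mp hm)
  change (Finsupp.weight fun _ => 1) m = p at h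
  rw [← Finsupp.degree_eq_weight_one] at h
  rw [Finsupp.degree_apply] at h
  rw [Finset.sum_subset (Finset.subset_univ m.support)
    (fun i _ hi => Finsupp.notMem_support_iff.mp hi)] at h
  rw [Fin.sum_univ_six] at h
  exact h

/-- Let `f ∈ ℂ[x1,…,x6]` be homogeneous of degree `p ≥ 1` with no monomial divisible by
`x4·x5` (variables indexed `0,…,5`, so `x4 = X 3`, `x5 = X 4`, `x6 = X 5`).  If the
substitution `f(y1, y2, y3, y3y4, 1, y4)` is divisible by `y4^(p-1)`, then every monomial of
`f` has total degree at least `p - 1` in the variables `x4` and `x6`. -/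
theorem monomials_high_degree_in_x4_x6 (p : ℕ) (hp : 1 ≤ p)
    (f : MvPolynomial (Fin 6) ℂ) (hf : f.IsHomogeneous p)
    (hno : ∀ m ∈ f.support, m 3 = 0 ∨ m 4 = 0)
    (hdiv : (X 3 : MvPolynomial (Fin 4) ℂ) ^ (p - 1) ∣
      aeval ![X 0, X 1, X 2, X 2 * X 3, 1, X 3] f) :
    ∀ m ∈ f.support, p - 1 ≤ m 3 + m 5 := by
  intro m hm
  -- injectivity of phi on the support
  have hinj : ∀ m' ∈ f.support, phi m' = phi m → m' = m := by
    intro m' hm' hphi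
    have e0 : m' 0 = m 0 := by
      have := congrArg (fun s => s 0) hphi
      simpa [(phi_apply m').1, (phi_apply m).1] using this
    have e1 : m' 1 = m 1 := by
      have := congrArg (fun s => s 1) hphi
      simpa [(phi_apply m').2.1, (phi_apply m).2.1] using this
    have e2 : m' 2 + m' 3 = m 2 + m 3 := by
      have := congrArg (fun s => s 2) hphi
      simpa [(phi_apply m').2.2.1, (phi_apply m).2.2.1] using this
    have e3 : m' 3 + m' 5 = m 3 + m 5 := by
      have := congrArg (fun s => s 3) hphi
      simpa [(phi_apply m').2.2.2, (phi_apply m).2.2.2] using this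
    have d := deg_sum p hf hm
    have d' := deg_sum p hf hm'
    have n := hno m hm
    have n' := hno m' hm'
    ext i
    fin_cases i
    · show m' 0 = m 0; omega
    · show m' 1 = m 1; omega
    · show m' 2 = m 2; omega
    · show m' 3 = m 3; omega
    · show m' 4 = m 4; omega
    · show m' 5 = m 5; omega
  -- coefficient of `phi m` in the substituted polynomial
  have hcoeff : coeff (phi m) (aeval ![X 0, X 1, X 2, X 2 * X 3, 1, X 3] f) = coeff m f := by
    classical
    conv_lhs => rw [f.as_sum]
    rw [map_sum]
    simp only [aeval_monomial, Finsupp.prod_pow, aeval_mono, algebraMap_eq, C_mul_monomial,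
      mul_one]
    rw [coeff_sum]
    simp only [coeff_monomial]
    rw [Finset.sum_eq_single m (fun m' hm' hne => if_neg (fun h => hne (hinj m' hm' h)))
      (fun h => absurd hm h)]
    exact if_pos rfl
  -- divisibility forces the `X 3`-exponent to be large
  obtain ⟨r, hr⟩ := hdiv
  by_contra hlt
  push_neg at hlt
  have : ¬ Finsupp.single (3 : Fin 4) (p - 1) ≤ phi m := by
    rw [Finsupp.single_le_iff, (phi_apply m).2.2.2]
    omega
  rw [hr, X_pow_eq_monomial, coeff_monomial_mul', if_neg this] at hcoeff
  exact mem_support_iff.mp hm hcoeff.symm
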